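/- For every μ > 0, t > 0 and every real η with η > 0 and (η−1)/2 + μ > 0, the Mellin transform of the density q(x,t;μ) = ∫₀^∞ (2πs)^(−1/2) e^(−x²/(2s)) · s^(μ−1) e^(−s/t) / (t^μ Γ(μ)) ds of the process B(G₁(t)) satisfies ∫₀^∞ x^(η−1) q(x,t;μ) dx = ( 2^((η−1)/2) / (2√π) ) · Γ(η/2) · Γ((η−1)/2 + μ) · t^((η−1)/2) / Γ(μ). -/

import Mathlib

open MeasureTheory Real Set

/-- The density of `B(G₁(t))`, a standard Brownian motion subordinated to an
independent Gamma process. -/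
noncomputable def qBG (μ x t : ℝ) : ℝ :=
  ∫ s in Set.Ioi (0:ℝ),
    (2 * Real.pi * s) ^ (-(1:ℝ) / 2) * Real.exp (-x ^ 2 / (2 * s)) *
      (s ^ (μ - 1) * Real.exp (-s / t) / (t ^ μ * Real.Gamma μ))

/-- the Mellin transform of the density of `B(G₁(t))` is
`∫₀^∞ x^(η−1) q(x,t;μ) dx
   = (2^((η−1)/2)/(2√π)) Γ(η/2) Γ((η−1)/2 + μ) t^((η−1)/2) / Γ(μ)`
for `η > 0` with `(η−1)/2 + μ > 0`. -/
theorem stmt_14 (μ : ℝ) (hμ : 0 < μ) (t η : ℝ) (ht : 0 < t)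
    (hη₀ : 0 < η) (hημ : 0 < (η - 1) / 2 + μ) :
    (∫ x in Set.Ioi (0:ℝ), x ^ (η - 1) * qBG μ x t)
      = (2:ℝ) ^ ((η - 1) / 2) / (2 * Real.sqrt Real.pi) * Real.Gamma (η / 2) *
          Real.Gamma ((η - 1) / 2 + μ) * t ^ ((η - 1) / 2) / Real.Gamma μ := by
  have hπ : 0 < Real.pi := Real.pi_pos
  have hΓμ : 0 < Real.Gamma μ := Real.Gamma_pos_of_pos hμ
  have htμ : 0 < t ^ μ := Real.rpow_pos_of_pos ht μ
  set a : ℝ := (η - 1) / 2 + μ with ha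
  set K : ℝ := (2 * Real.pi) ^ (-(1:ℝ)/2) * (2:ℝ) ^ (η/2) / 2 * Real.Gamma (η/2)
      / (t ^ μ * Real.Gamma μ) with hK
  set F : ℝ → ℝ → ℝ := fun x s => x ^ (η - 1) *
      ((2 * Real.pi * s) ^ (-(1:ℝ) / 2) * Real.exp (-x ^ 2 / (2 * s)) *
        (s ^ (μ - 1) * Real.exp (-s / t) / (t ^ μ * Real.Gamma μ))) with hF
  -- Gaussian-type inner integral
  have hgauss : ∀ s : ℝ, 0 < s →
      ∫ x in Ioi (0:ℝ), x ^ (η - 1) * Real.exp (-(1/(2*s)) * x ^ 2)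
        = (2*s) ^ (η/2) * (1/2) * Real.Gamma (η/2) := by
    intro s hs
    have hb : (0:ℝ) < 1/(2*s) := by positivity
    have h := integral_rpow_mul_exp_neg_mul_rpow (p := 2) (q := η - 1) two_pos
      (by linarith) hb
    rw [show η - 1 + 1 = η by ring] at h
    rw [show (1/(2*s) : ℝ) ^ (-η/2) = (2*s)^(η/2) by
      rw [one_div, ← Real.rpow_neg_one, ← Real.rpow_mul (by positivity)]
      congr 1; ring] at h
    rw [← h]
    refine setIntegral_congr_fun measurableSet_Ioi fun x hx => ?_
    rw [show x ^ (2:ℝ) = x ^ (2:ℕ) by rw [← Real.rpow_natCast x 2]; norm_num]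
  -- rewrite F with clean Gaussian factor
  have hFeq : ∀ s : ℝ, 0 < s → (fun x => F x s) = fun x =>
      ((2 * Real.pi * s) ^ (-(1:ℝ)/2) *
        (s ^ (μ - 1) * Real.exp (-s / t) / (t ^ μ * Real.Gamma μ))) *
      (x ^ (η - 1) * Real.exp (-(1/(2*s)) * x ^ 2)) := by
    intro s hs
    funext x
    simp only [hF]
    rw [show -x ^ 2 / (2 * s) = -(1/(2*s)) * x ^ 2 by field_simp]
    ring
  -- inner integral in closed form
  have hinner : ∀ s : ℝ, 0 < s →
      (∫ x in Ioi (0:ℝ), F x s) = K * (s ^ (a - 1) * Real.exp (-(1/t * s))) := by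
    intro s hs
    rw [hFeq s hs, integral_const_mul, hgauss s hs]
    rw [show (2 * Real.pi * s : ℝ) = (2 * Real.pi) * s by ring,
      Real.mul_rpow (by positivity) hs.le,
      Real.mul_rpow (by norm_num) hs.le]
    rw [hK, ha]
    rw [show Real.exp (-s/t) = Real.exp (-(1/t * s)) by congr 1; ring]
    rw [show (s:ℝ) ^ ((η-1)/2 + μ - 1) = s ^ (-(1:ℝ)/2) * s ^ (μ - 1) * s ^ (η/2) by
      rw [← Real.rpow_add hs, ← Real.rpow_add hs]; congr 1; ring]
    ring
  -- positivity of F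
  have hFpos : ∀ x ∈ Ioi (0:ℝ), ∀ s ∈ Ioi (0:ℝ), 0 ≤ F x s := by
    intro x hx s hs
    rw [mem_Ioi] at hx hs
    simp only [hF]
    positivity
  -- integrability in s of the closed form
  have hsint : IntegrableOn (fun s : ℝ => K * (s ^ (a - 1) * Real.exp (-(1/t * s))))
      (Ioi 0) := by
    refine Integrable.const_mul ?_ _
    have := integrableOn_rpow_mul_exp_neg_mul_rpow (p := 1) (s := a - 1) (b := 1/t)
      (by linarith) one_pos (by positivity)
    refine this.congr_fun (fun s hs => ?_) measurableSet_Ioi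
    beta_reduce; rw [Real.rpow_one, neg_mul]
  -- measurability
  have hmeas : AEStronglyMeasurable (Function.uncurry F)
      ((volume.restrict (Ioi 0)).prod (volume.restrict (Ioi 0))) := by
    apply Measurable.aestronglyMeasurable
    simp only [hF, Function.uncurry]
    fun_prop
  -- integrability on the product
  have hInt : Integrable (Function.uncurry F)
      ((volume.restrict (Ioi 0)).prod (volume.restrict (Ioi 0))) := by
    rw [integrable_prod_iff' hmeas]
    constructor
    · filter_upwards [ae_restrict_mem measurableSet_Ioi] with s hs
      rw [mem_Ioi] at hs
      have hI : IntegrableOn (fun x => ((2 * Real.pi * s) ^ (-(1:ℝ)/2) *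
          (s ^ (μ - 1) * Real.exp (-s / t) / (t ^ μ * Real.Gamma μ))) *
          (x ^ (η - 1) * Real.exp (-(1/(2*s)) * x ^ 2))) (Ioi 0) :=
        (integrableOn_rpow_mul_exp_neg_mul_sq (by positivity) (by linarith)).const_mul _
      have : (fun x => Function.uncurry F (x, s)) = fun x => F x s := rfl
      rw [this, hFeq s hs]
      exact hI
    · refine hsint.congr ?_
      filter_upwards [ae_restrict_mem measurableSet_Ioi] with s hs
      have h1 : (∫ x in Ioi (0:ℝ), ‖Function.uncurry F (x, s)‖)
          = ∫ x in Ioi (0:ℝ), F x s :=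
        setIntegral_congr_fun measurableSet_Ioi fun x hx =>
          Real.norm_of_nonneg (hFpos x hx s hs)
      exact (h1.trans (hinner s hs)).symm
  -- main computation
  calc (∫ x in Ioi (0:ℝ), x ^ (η - 1) * qBG μ x t)
      = ∫ x in Ioi (0:ℝ), ∫ s in Ioi (0:ℝ), F x s := by
        refine setIntegral_congr_fun measurableSet_Ioi fun x _ => ?_
        simp only [qBG, hF, ← integral_const_mul]
    _ = ∫ s in Ioi (0:ℝ), ∫ x in Ioi (0:ℝ), F x s := integral_integral_swap hInt
    _ = ∫ s in Ioi (0:ℝ), K * (s ^ (a - 1) * Real.exp (-(1/t * s))) :=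
        setIntegral_congr_fun measurableSet_Ioi fun s hs => hinner s hs
    _ = K * ((1/(1/t)) ^ a * Real.Gamma a) := by
        rw [integral_const_mul, integral_rpow_mul_exp_neg_mul_Ioi hημ (by positivity)]
    _ = (2:ℝ) ^ ((η - 1) / 2) / (2 * Real.sqrt Real.pi) * Real.Gamma (η / 2) *
          Real.Gamma a * t ^ ((η - 1) / 2) / Real.Gamma μ := by
        rw [one_div_one_div, hK]
        rw [show ((2:ℝ) * Real.pi) ^ (-(1:ℝ)/2)
            = (Real.sqrt 2 * Real.sqrt Real.pi)⁻¹ by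
          rw [show (-(1:ℝ)/2) = -(1/2) by norm_num,
            Real.rpow_neg (by positivity), ← Real.sqrt_eq_rpow,
            Real.sqrt_mul (by norm_num) Real.pi]]
        rw [show (2:ℝ) ^ (η/2) = Real.sqrt 2 * (2:ℝ) ^ ((η-1)/2) by
          rw [show Real.sqrt 2 = (2:ℝ) ^ ((1:ℝ)/2) from Real.sqrt_eq_rpow 2,
            ← Real.rpow_add two_pos]
          congr 1; ring]
        rw [show t ^ a = t ^ ((η-1)/2) * t ^ μ by
          rw [← Real.rpow_add ht]]
        have h2 : Real.sqrt 2 ≠ 0 := by positivity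
        have hp2 : Real.sqrt Real.pi ≠ 0 := by positivity
        field_simp
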